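/- SL₂(ℚ) is generated by SL₂(ℤ) (embedded via the inclusion ℤ → ℚ) together with the diagonal torus T = {t_λ : λ ∈ ℚˣ}. -/

import Mathlib

open Matrix

/-- The canonical embedding `SL₂(ℤ) → SL₂(ℚ)`. -/
def incl : Matrix.SpecialLinearGroup (Fin 2) ℤ →* Matrix.SpecialLinearGroup (Fin 2) ℚ :=
  Matrix.SpecialLinearGroup.map (Int.castRingHom ℚ)

def torus (lam : ℚ) (h : lam ≠ 0) : Matrix.SpecialLinearGroup (Fin 2) ℚ :=
  ⟨!![lam, 0; 0, lam⁻¹], by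
    simp [Matrix.det_fin_two_of, mul_inv_cancel₀ h]⟩

section Aux

abbrev genSet : Set (Matrix.SpecialLinearGroup (Fin 2) ℚ) :=
  Set.range incl ∪ {g | ∃ (lam : ℚ) (h : lam ≠ 0), g = torus lam h}

abbrev H : Subgroup (Matrix.SpecialLinearGroup (Fin 2) ℚ) := Subgroup.closure genSet

lemma torus_mem (lam : ℚ) (h : lam ≠ 0) : torus lam h ∈ H :=
  Subgroup.subset_closure (Or.inr ⟨lam, h, rfl⟩)

lemma incl_mem (A : Matrix.SpecialLinearGroup (Fin 2) ℤ) : incl A ∈ H :=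
  Subgroup.subset_closure (Or.inl ⟨A, rfl⟩)

def upperZ (n : ℤ) : Matrix.SpecialLinearGroup (Fin 2) ℤ :=
  ⟨!![1, n; 0, 1], by simp [Matrix.det_fin_two_of]⟩

def lowerZ (n : ℤ) : Matrix.SpecialLinearGroup (Fin 2) ℤ :=
  ⟨!![1, 0; n, 1], by simp [Matrix.det_fin_two_of]⟩

def upperQ (c : ℚ) : Matrix.SpecialLinearGroup (Fin 2) ℚ :=
  ⟨!![1, c; 0, 1], by simp [Matrix.det_fin_two_of]⟩

def lowerQ (c : ℚ) : Matrix.SpecialLinearGroup (Fin 2) ℚ :=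
  ⟨!![1, 0; c, 1], by simp [Matrix.det_fin_two_of]⟩

def mkSL (A : Matrix (Fin 2) (Fin 2) ℚ) (h : Matrix.det A = 1) :
    Matrix.SpecialLinearGroup (Fin 2) ℚ := ⟨A, h⟩

lemma den_ne (c : ℚ) : (c.den : ℚ) ≠ 0 := by exact_mod_cast c.den_nz

lemma den_inv_ne (c : ℚ) : ((c.den : ℚ))⁻¹ ≠ 0 := inv_ne_zero (den_ne c)

lemma num_mul_den (c : ℚ) : ((c.num * c.den : ℤ) : ℚ) = c * c.den ^ 2 := by
  have h := Rat.num_div_den c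
  rw [div_eq_iff (den_ne c)] at h
  push_cast
  rw [h]; ring

lemma upperQ_mem (c : ℚ) : upperQ c ∈ H := by
  have key : upperQ c =
      torus ((c.den : ℚ))⁻¹ (den_inv_ne c) * incl (upperZ (c.num * c.den)) *
        torus (c.den : ℚ) (den_ne c) := by
    apply (Subtype.ext : _ → (_ : Matrix.SpecialLinearGroup (Fin 2) ℚ) = _)
    rw [Matrix.SpecialLinearGroup.coe_mul, Matrix.SpecialLinearGroup.coe_mul,
      incl, Matrix.SpecialLinearGroup.map_apply_coe]
    have h := num_mul_den c
    have hd := den_ne c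
    simp only [upperQ, torus, incl, upperZ, Matrix.SpecialLinearGroup.coe_mul,
      Matrix.SpecialLinearGroup.map_apply_coe, RingHom.mapMatrix_apply, Int.coe_castRingHom]
    ext i j
    fin_cases i <;> fin_cases j <;>
      simp [Matrix.mul_apply, Matrix.vecMul, dotProduct, Fin.sum_univ_two,
        Matrix.map_apply]
    all_goals field_simp
    all_goals (have h3 := Rat.num_div_den c; rw [div_eq_iff hd] at h3; linarith)
  rw [key]
  exact mul_mem (mul_mem (torus_mem _ _) (incl_mem _)) (torus_mem _ _)

lemma lowerQ_mem (c : ℚ) : lowerQ c ∈ H := by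
  have key : lowerQ c =
      torus (c.den : ℚ) (den_ne c) * incl (lowerZ (c.num * c.den)) *
        torus ((c.den : ℚ))⁻¹ (den_inv_ne c) := by
    apply (Subtype.ext : _ → (_ : Matrix.SpecialLinearGroup (Fin 2) ℚ) = _)
    rw [Matrix.SpecialLinearGroup.coe_mul, Matrix.SpecialLinearGroup.coe_mul,
      incl, Matrix.SpecialLinearGroup.map_apply_coe]
    have h := num_mul_den c
    have hd := den_ne c
    simp only [lowerQ, torus, incl, lowerZ, Matrix.SpecialLinearGroup.coe_mul,
      Matrix.SpecialLinearGroup.map_apply_coe, RingHom.mapMatrix_apply, Int.coe_castRingHom]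
    ext i j
    fin_cases i <;> fin_cases j <;>
      simp [Matrix.mul_apply, Matrix.vecMul, dotProduct, Fin.sum_univ_two,
        Matrix.map_apply]
    all_goals field_simp
    all_goals (have h3 := Rat.num_div_den c; rw [div_eq_iff hd] at h3; linarith)
  rw [key]
  exact mul_mem (mul_mem (torus_mem _ _) (incl_mem _)) (torus_mem _ _)

lemma mem_H_of_upper {g : Matrix.SpecialLinearGroup (Fin 2) ℚ} {c : ℚ}
    (hg : (g : Matrix (Fin 2) (Fin 2) ℚ) = !![1, c; 0, 1]) : g ∈ H := by
  have : g = upperQ c := Subtype.ext hg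
  rw [this]; exact upperQ_mem c

lemma mem_H_of_lower {g : Matrix.SpecialLinearGroup (Fin 2) ℚ} {c : ℚ}
    (hg : (g : Matrix (Fin 2) (Fin 2) ℚ) = !![1, 0; c, 1]) : g ∈ H := by
  have : g = lowerQ c := Subtype.ext hg
  rw [this]; exact lowerQ_mem c

lemma transvection_mem (t : Matrix.TransvectionStruct (Fin 2) ℚ)
    (h : Matrix.det t.toMatrix = 1) :
    (⟨t.toMatrix, h⟩ : Matrix.SpecialLinearGroup (Fin 2) ℚ) ∈ H := by
  obtain ⟨i, j, hij, c⟩ := t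
  fin_cases i <;> fin_cases j
  · exact absurd rfl hij
  · apply mem_H_of_upper (c := c)
    show Matrix.TransvectionStruct.toMatrix _ = _
    ext a b
    fin_cases a <;> fin_cases b <;>
      simp [Matrix.TransvectionStruct.toMatrix, Matrix.transvection, Matrix.single,
        Matrix.one_apply]
  · apply mem_H_of_lower (c := c)
    show Matrix.TransvectionStruct.toMatrix _ = _
    ext a b
    fin_cases a <;> fin_cases b <;>
      simp [Matrix.TransvectionStruct.toMatrix, Matrix.transvection, Matrix.single,
        Matrix.one_apply]
  · exact absurd rfl hij

lemma list_transvec_mem (L : List (Matrix.TransvectionStruct (Fin 2) ℚ))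
    (h : Matrix.det (L.map Matrix.TransvectionStruct.toMatrix).prod = 1) :
    (⟨(L.map Matrix.TransvectionStruct.toMatrix).prod, h⟩ :
      Matrix.SpecialLinearGroup (Fin 2) ℚ) ∈ H := by
  induction L with
  | nil => exact one_mem H
  | cons t L ih =>
    have h1 : Matrix.det t.toMatrix = 1 := t.det
    have h2 : Matrix.det (L.map Matrix.TransvectionStruct.toMatrix).prod = 1 :=
      Matrix.TransvectionStruct.det_toMatrix_prod L
    have heq : (⟨((t :: L).map Matrix.TransvectionStruct.toMatrix).prod, h⟩ :
        Matrix.SpecialLinearGroup (Fin 2) ℚ) =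
        mkSL t.toMatrix h1 * mkSL (L.map Matrix.TransvectionStruct.toMatrix).prod h2 := by
      apply Subtype.ext
      simp [mkSL]; rfl
    rw [heq]
    exact mul_mem (transvection_mem t h1) (ih h2)

lemma mkSL_eq (A : Matrix (Fin 2) (Fin 2) ℚ) (h : Matrix.det A = 1) :
    (⟨A, h⟩ : Matrix.SpecialLinearGroup (Fin 2) ℚ) = mkSL A h := rfl

lemma diagonal_mem (D : Fin 2 → ℚ) (h : Matrix.det (Matrix.diagonal D) = 1) :
    (⟨Matrix.diagonal D, h⟩ : Matrix.SpecialLinearGroup (Fin 2) ℚ) ∈ H := by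
  have hdet : D 0 * D 1 = 1 := by
    simpa [Matrix.det_diagonal, Fin.prod_univ_two] using h
  have h0 : D 0 ≠ 0 := left_ne_zero_of_mul_eq_one hdet
  have h1 : D 1 = (D 0)⁻¹ := eq_inv_of_mul_eq_one_right hdet
  have heq : (⟨Matrix.diagonal D, h⟩ : Matrix.SpecialLinearGroup (Fin 2) ℚ) =
      torus (D 0) h0 := by
    apply Subtype.ext
    simp only [torus]
    ext a b
    fin_cases a <;> fin_cases b <;> simp [Matrix.diagonal, h1]
  rw [heq]
  exact torus_mem _ _

end Aux

/-- `SL₂(ℚ)` is generated by `SL₂(ℤ)` together with the diagonal torus. -/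
theorem sl2Q_generated_by_sl2Z_and_torus :
    Subgroup.closure
      (Set.range incl ∪ {g | ∃ (lam : ℚ) (h : lam ≠ 0), g = torus lam h}) = ⊤ := by
  rw [eq_top_iff]
  intro g _
  obtain ⟨L, L', D, hD⟩ :=
    Matrix.Pivot.exists_list_transvec_mul_diagonal_mul_list_transvec
      (g : Matrix (Fin 2) (Fin 2) ℚ)
  have hL : Matrix.det (L.map Matrix.TransvectionStruct.toMatrix).prod = 1 :=
    Matrix.TransvectionStruct.det_toMatrix_prod L
  have hL' : Matrix.det (L'.map Matrix.TransvectionStruct.toMatrix).prod = 1 :=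
    Matrix.TransvectionStruct.det_toMatrix_prod L'
  have hDdet : Matrix.det (Matrix.diagonal D) = 1 := by
    have hg : Matrix.det (g : Matrix (Fin 2) (Fin 2) ℚ) = 1 := g.2
    rw [hD] at hg
    simpa [hL, hL'] using hg
  have hgeq : g = mkSL (L.map Matrix.TransvectionStruct.toMatrix).prod hL *
      mkSL (Matrix.diagonal D) hDdet *
      mkSL (L'.map Matrix.TransvectionStruct.toMatrix).prod hL' := by
    apply Subtype.ext
    exact hD
  rw [hgeq]
  exact mul_mem (mul_mem (mkSL_eq _ hL ▸ list_transvec_mem L hL)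
    (mkSL_eq _ hDdet ▸ diagonal_mem D hDdet))
    (mkSL_eq _ hL' ▸ list_transvec_mem L' hL')
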